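/- Let 𝔑 be a factor (von Neumann algebra with trivial center) on a Hilbert space ℋ. Then for any nonzero operators A ∈ 𝔑 and A' ∈ 𝔑' (the commutant), the product AA' is nonzero. -/

import Mathlib

open scoped InnerProductSpace

/-- A von Neumann algebra (given by its carrier set of bounded operators) is a factor:
its center consists of scalar multiples of the identity. -/
def IsFactorSet {H : Type*} [NormedAddCommGroup H] [InnerProductSpace ℂ H] [CompleteSpace H]
    (S : Set (H →L[ℂ] H)) : Prop :=
  ∀ x ∈ S, (∀ y ∈ S, x * y = y * x) → ∃ c : ℂ, x = c • (1 : H →L[ℂ] H)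

open ContinuousLinearMap in
/-- If a closed subspace is invariant under `T` and `T†`, then the (star) projection onto it
commutes with `T`. -/
lemma commute_starProjection {H : Type*} [NormedAddCommGroup H]
    [InnerProductSpace ℂ H] [CompleteSpace H] (T : H →L[ℂ] H) (K : Submodule ℂ H)
    [CompleteSpace K] (h1 : ∀ x ∈ K, T x ∈ K) (h2 : ∀ x ∈ K, adjoint T x ∈ K) :
    T ∘L (K.subtypeL ∘L Submodule.orthogonalProjectionOnto K) =
      (K.subtypeL ∘L Submodule.orthogonalProjectionOnto K) ∘L T := by
  ext x
  have hmem : (Submodule.orthogonalProjectionOnto K x : H) ∈ K := Submodule.coe_mem _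
  have hsub : x - (Submodule.orthogonalProjectionOnto K x : H) ∈ Kᗮ :=
    Submodule.sub_starProjection_mem_orthogonal (K := K) x
  have hTsub : T (x - (Submodule.orthogonalProjectionOnto K x : H)) ∈ Kᗮ := by
    intro u hu
    have := hsub (adjoint T u) (h2 u hu)
    rwa [ContinuousLinearMap.adjoint_inner_left] at this
  have hdecomp : T x = T (Submodule.orthogonalProjectionOnto K x : H)
      + T (x - (Submodule.orthogonalProjectionOnto K x : H)) := by
    rw [← map_add]; congr 1; abel
  simp only [ContinuousLinearMap.coe_comp', Function.comp_apply, Submodule.coe_subtypeL',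
    Submodule.coe_subtype]
  rw [hdecomp, map_add, Submodule.orthogonalProjectionOnto_mem_subspace_eq_self
    (⟨_, h1 _ hmem⟩ : K), Submodule.orthogonalProjectionOnto_apply_of_mem_orthogonal hTsub]
  simp

/-- If 𝔑 is a factor on a Hilbert space ℋ, then `A * A' ≠ 0` for any nonzero
`A ∈ 𝔑` and `A'` in the commutant `𝔑'`. -/
theorem factor_mul_commutant_ne_zero {H : Type*} [NormedAddCommGroup H]
    [InnerProductSpace ℂ H] [CompleteSpace H]
    (N : VonNeumannAlgebra H) (hfac : IsFactorSet (N : Set (H →L[ℂ] H)))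
    (A A' : H →L[ℂ] H) (hA : A ∈ N) (hA' : A' ∈ N.commutant)
    (hA0 : A ≠ 0) (hA'0 : A' ≠ 0) : A * A' ≠ 0 := by
  intro h
  apply hA0
  -- the generating set
  set S : Set H := {y : H | ∃ T' ∈ N.commutant, ∃ x : H, y = T' (A' x)} with hS
  set K : Submodule ℂ H := (Submodule.span ℂ S).topologicalClosure with hK
  have hKclosed : IsClosed (K : Set H) := Submodule.isClosed_topologicalClosure _
  haveI : CompleteSpace K := hKclosed.completeSpace_coe
  -- commutation helpers
  have hcommN : ∀ g ∈ N, ∀ z ∈ N.commutant, ∀ v : H, g (z v) = z (g v) := by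
    intro g hg z hz v
    have := (VonNeumannAlgebra.mem_commutant_iff.mp hz) g hg
    calc g (z v) = (g * z) v := rfl
    _ = (z * g) v := by rw [this]
    _ = z (g v) := rfl
  -- invariance of K under an operator T
  have hinv : ∀ T : H →L[ℂ] H, (∀ y ∈ S, T y ∈ Submodule.span ℂ S) → ∀ y ∈ K, T y ∈ K := by
    intro T hT y hy
    have h1 : Submodule.span ℂ S ≤ K.comap (T : H →ₗ[ℂ] H) := by
      rw [Submodule.span_le]
      intro z hz
      exact Submodule.le_topologicalClosure _ (hT z hz)
    have h2 : K ≤ K.comap (T : H →ₗ[ℂ] H) :=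
      Submodule.topologicalClosure_minimal _ h1 (hKclosed.preimage T.continuous)
    exact h2 hy
  -- K is invariant under the commutant
  have hinv' : ∀ T ∈ N.commutant, ∀ y ∈ K, T y ∈ K := by
    intro T hT
    apply hinv
    rintro y ⟨T', hT', x, rfl⟩
    refine Submodule.subset_span ⟨T * T', mul_mem hT hT', x, rfl⟩
  -- K is invariant under N
  have hinvN : ∀ T ∈ (N : Set (H →L[ℂ] H)), ∀ y ∈ K, T y ∈ K := by
    intro T hT
    apply hinv
    rintro y ⟨T', hT', x, rfl⟩
    refine Submodule.subset_span ⟨T', hT', T x, ?_⟩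
    rw [hcommN T hT T' hT', hcommN T hT A' hA']
  -- A vanishes on K
  have hAK : ∀ y ∈ K, A y = 0 := by
    intro y hy
    have h1 : Submodule.span ℂ S ≤ LinearMap.ker (A : H →ₗ[ℂ] H) := by
      rw [Submodule.span_le]
      rintro z ⟨T', hT', x, rfl⟩
      have : A (T' (A' x)) = T' (A (A' x)) := hcommN A hA T' hT' (A' x)
      have hz : A (A' x) = (A * A') x := rfl
      simp only [LinearMap.mem_ker, ContinuousLinearMap.coe_coe, this, hz, h, ContinuousLinearMap.zero_apply, map_zero,
        SetLike.mem_coe]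
    have h2 : K ≤ LinearMap.ker (A : H →ₗ[ℂ] H) :=
      Submodule.topologicalClosure_minimal _ h1 (ContinuousLinearMap.isClosed_ker A)
    exact h2 hy
  -- the projection onto K
  set P : H →L[ℂ] H := K.subtypeL ∘L Submodule.orthogonalProjectionOnto K with hP
  have hPK : ∀ x : H, P x ∈ K := fun x => Submodule.coe_mem _
  -- P commutes with the commutant, hence P ∈ N
  have hPN : P ∈ N := by
    rw [← VonNeumannAlgebra.commutant_commutant N, VonNeumannAlgebra.mem_commutant_iff]
    intro g hg
    have hstar : star g ∈ N.commutant := star_mem hg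
    have := commute_starProjection g K (hinv' g hg)
      (by rw [← ContinuousLinearMap.star_eq_adjoint]; exact hinv' (star g) hstar)
    exact this
  -- P commutes with N, hence it is central
  have hPcomm : ∀ g ∈ (N : Set (H →L[ℂ] H)), P * g = g * P := by
    intro g hg
    have hstar : star g ∈ N := star_mem hg
    exact (commute_starProjection g K (hinvN g hg)
      (by rw [← ContinuousLinearMap.star_eq_adjoint]; exact hinvN (star g) hstar)).symm
  obtain ⟨c, hc⟩ := hfac P hPN hPcomm
  -- A' x₀ ≠ 0 for some x₀; it lies in K, so P fixes it
  obtain ⟨x₀, hx₀⟩ : ∃ x, A' x ≠ 0 := by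
    by_contra hcon
    push_neg at hcon
    exact hA'0 (ContinuousLinearMap.ext fun x => by rw [hcon x]; rfl)
  have hx₀K : A' x₀ ∈ K :=
    Submodule.le_topologicalClosure _ (Submodule.subset_span ⟨1, one_mem _, x₀, by simp⟩)
  have hPfix : P (A' x₀) = A' x₀ := by
    simp only [hP, ContinuousLinearMap.coe_comp', Function.comp_apply, Submodule.coe_subtypeL',
      Submodule.coe_subtype]
    rw [Submodule.orthogonalProjectionOnto_mem_subspace_eq_self (⟨A' x₀, hx₀K⟩ : K)]
  have hc1 : c = 1 := by
    have : c • A' x₀ = A' x₀ := by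
      have := hPfix
      rw [hc] at this
      simpa using this
    by_contra hne
    have : (c - 1) • A' x₀ = 0 := by rw [sub_smul, one_smul, this, sub_self]
    exact hx₀ ((smul_eq_zero.mp this).resolve_left (sub_ne_zero.mpr hne))
  -- hence P = 1, so K = ⊤ and A = 0
  ext x
  have hxK : x ∈ K := by
    have : P x = x := by rw [hc, hc1]; simp
    rw [← this]; exact hPK x
  simpa using hAK x hxK
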